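/- Let q = 2m+1 be an odd prime with m ≥ 1, and define the m×m matrix E by E(i,j) = min(i·j mod q, q − (i·j mod q)) for 1 ≤ i,j ≤ m. Then each column of E is a permutation of {1,...,m} (so E is an m×m Latin hypercube design), and every pair of distinct rows of E has L1-distance exactly m(m+1)/3; that is, E is an L1-equidistant design with d_1(E) = m(m+1)/3 = ⌊(m+1)m/3⌋. -/

import Mathlib

/-- Entry `(i,j)` of the design `E`: `min(i·j mod q, q - (i·j mod q))`. -/
def Eglp (q i j : ℕ) : ℕ :=
  min (i * j % q) (q - i * j % q)

namespace Stmt13Aux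

def phi (q : ℕ) (x : ZMod q) : ℕ := min x.val (q - x.val)

lemma phi_zero (q : ℕ) [NeZero q] : phi q 0 = 0 := by
  simp [phi, ZMod.val_zero]

lemma phi_neg {q : ℕ} [NeZero q] (x : ZMod q) : phi q (-x) = phi q x := by
  have hv : x.val < q := ZMod.val_lt x
  rcases eq_or_ne x 0 with h | h
  · simp [h]
  · have h0 : x.val ≠ 0 := fun hh => h ((ZMod.val_eq_zero x).1 hh)
    simp only [phi, ZMod.neg_val, if_neg h]
    omega

set_option maxHeartbeats 2000000 in
/-- Key identity: `|φ s - φ t| = min (φ (s-t)) (φ (s+t))`. -/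
lemma abs_phi_sub {m : ℕ} (s t : ZMod (2*m+1)) :
    ((phi (2*m+1) s : ℤ) - (phi (2*m+1) t : ℤ)).natAbs
      = min (phi (2*m+1) (s - t)) (phi (2*m+1) (s + t)) := by
  have hs : s.val < 2*m+1 := ZMod.val_lt s
  have ht : t.val < 2*m+1 := ZMod.val_lt t
  have hadd : (s + t).val = (s.val + t.val) % (2*m+1) := ZMod.val_add s t
  have hsub : (s - t).val = (s.val + (2*m+1 - t.val)) % (2*m+1) := by
    rcases eq_or_ne t 0 with h | h
    · subst h
      simp [ZMod.val_zero, Nat.add_mod_right, Nat.mod_eq_of_lt hs]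
    · rw [sub_eq_add_neg, ZMod.val_add, ZMod.neg_val, if_neg h]
  have hA : (s.val + t.val) % (2*m+1) = if s.val + t.val < 2*m+1 then s.val + t.val
      else s.val + t.val - (2*m+1) := by
    split_ifs with h
    · exact Nat.mod_eq_of_lt h
    · rw [Nat.mod_eq_sub_mod (le_of_not_gt h), Nat.mod_eq_of_lt (by omega)]
  have hB : (s.val + (2*m+1 - t.val)) % (2*m+1)
      = if s.val + (2*m+1 - t.val) < 2*m+1 then s.val + (2*m+1 - t.val)
      else s.val + (2*m+1 - t.val) - (2*m+1) := by
    split_ifs with h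
    · exact Nat.mod_eq_of_lt h
    · rw [Nat.mod_eq_sub_mod (le_of_not_gt h), Nat.mod_eq_of_lt (by omega)]
  simp only [phi, hadd, hsub, hA, hB]
  split_ifs <;> omega


/-- `∑_{n<2m+1} min(n, 2m+1-n) = m(m+1)` -/
lemma sum_min_range (m : ℕ) :
    ∑ n ∈ Finset.range (2*m+1), min n (2*m+1-n) = m*(m+1) := by
  induction m with
  | zero => simp
  | succ k ih =>
    have h1 : 2*(k+1)+1 = (2*k+2)+1 := by ring
    rw [h1, Finset.sum_range_succ']
    have h2 : ∀ i ∈ Finset.range (2*k+2),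
        min (i+1) (2*k+2+1-(i+1)) = min i (2*k+1-i) + 1 := by
      intro i hi
      rw [Finset.mem_range] at hi
      omega
    rw [Finset.sum_congr rfl h2, Finset.sum_add_distrib, Finset.sum_const,
      Finset.card_range, Finset.sum_range_succ, ih]
    simp
    ring

lemma sum_zmod (q : ℕ) [NeZero q] (f : ZMod q → ℕ) :
    ∑ y : ZMod q, f y = ∑ n ∈ Finset.range q, f (n : ZMod q) := by
  refine Finset.sum_nbij' (fun y => y.val) (fun n => (n : ZMod q)) ?_ ?_ ?_ ?_ ?_
  · intro a _; exact Finset.mem_range.2 (ZMod.val_lt a)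
  · intro b _; exact Finset.mem_univ _
  · intro a _; exact ZMod.natCast_zmod_val a
  · intro b hb; exact ZMod.val_natCast_of_lt (Finset.mem_range.1 hb)
  · intro a _; rw [ZMod.natCast_zmod_val]

lemma sum_phi (m : ℕ) : ∑ y : ZMod (2*m+1), phi (2*m+1) y = m*(m+1) := by
  rw [sum_zmod]
  rw [← sum_min_range m]
  refine Finset.sum_congr rfl fun n hn => ?_
  rw [Finset.mem_range] at hn
  simp only [phi, ZMod.val_natCast, Nat.mod_eq_of_lt hn]

/-- reindexing a sum over `ZMod q` by multiplication by a unit -/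
lemma sum_mul_reindex {q : ℕ} [Fact (Nat.Prime q)] (u : ZMod q) (hu : u ≠ 0)
    (F : ZMod q → ℕ) : ∑ y : ZMod q, F (u * y) = ∑ y : ZMod q, F y :=
  Fintype.sum_bijective (fun y => u * y) (Equiv.mulLeft₀ u hu).bijective _ _ (fun _ => rfl)

def Sd (m : ℕ) (a b : ZMod (2*m+1)) : ℕ :=
  ∑ y : ZMod (2*m+1), ((phi (2*m+1) (a*y) : ℤ) - (phi (2*m+1) (b*y) : ℤ)).natAbs

def Md (m : ℕ) (a b : ZMod (2*m+1)) : ℕ :=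
  ∑ y : ZMod (2*m+1), min (phi (2*m+1) (a*y)) (phi (2*m+1) (b*y))

lemma Sd_comm (m : ℕ) (a b : ZMod (2*m+1)) : Sd m a b = Sd m b a := by
  unfold Sd
  refine Finset.sum_congr rfl fun y _ => ?_
  omega

lemma Md_comm (m : ℕ) (a b : ZMod (2*m+1)) : Md m a b = Md m b a := by
  unfold Md
  refine Finset.sum_congr rfl fun y _ => ?_
  omega

lemma Md_neg_left (m : ℕ) (a b : ZMod (2*m+1)) : Md m (-a) b = Md m a b := by
  unfold Md
  refine Finset.sum_congr rfl fun y _ => ?_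
  rw [neg_mul, phi_neg]

lemma Sd_eq_Md (m : ℕ) (a b : ZMod (2*m+1)) : Sd m a b = Md m (a-b) (a+b) := by
  unfold Sd Md
  refine Finset.sum_congr rfl fun y _ => ?_
  rw [abs_phi_sub, ← sub_mul, ← add_mul]

lemma sum_phi_mul (m : ℕ) [Fact (Nat.Prime (2*m+1))] (a : ZMod (2*m+1)) (ha : a ≠ 0) :
    ∑ y : ZMod (2*m+1), phi (2*m+1) (a*y) = m*(m+1) := by
  rw [sum_mul_reindex a ha (phi (2*m+1)), sum_phi]

lemma two_Md_add_Sd (m : ℕ) [Fact (Nat.Prime (2*m+1))] (a b : ZMod (2*m+1))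
    (ha : a ≠ 0) (hb : b ≠ 0) : 2 * Md m a b + Sd m a b = 2*(m*(m+1)) := by
  unfold Sd Md
  rw [Finset.mul_sum, ← Finset.sum_add_distrib]
  have h : ∀ y : ZMod (2*m+1),
      2 * min (phi (2*m+1) (a*y)) (phi (2*m+1) (b*y))
        + ((phi (2*m+1) (a*y) : ℤ) - (phi (2*m+1) (b*y) : ℤ)).natAbs
      = phi (2*m+1) (a*y) + phi (2*m+1) (b*y) := fun y => by omega
  rw [Finset.sum_congr rfl fun y _ => h y, Finset.sum_add_distrib,
    sum_phi_mul m a ha, sum_phi_mul m b hb]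
  ring

lemma Sd_smul (m : ℕ) [Fact (Nat.Prime (2*m+1))] (u a b : ZMod (2*m+1)) (hu : u ≠ 0) :
    Sd m (u*a) (u*b) = Sd m a b := by
  unfold Sd
  rw [← sum_mul_reindex u hu
    (fun y => ((phi (2*m+1) (a*y) : ℤ) - (phi (2*m+1) (b*y) : ℤ)).natAbs)]
  refine Finset.sum_congr rfl fun y _ => ?_
  rw [mul_comm u a, mul_assoc, mul_comm u b, mul_assoc]

lemma Sd_const (m : ℕ) [Fact (Nat.Prime (2*m+1))] (hm : 1 ≤ m) (a b : ZMod (2*m+1))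
    (ha : a ≠ 0) (hb : b ≠ 0) (hab : a + b ≠ 0) (hab' : a - b ≠ 0) :
    3 * Sd m a b = 2*(m*(m+1)) := by
  have h2 : (2 : ZMod (2*m+1)) ≠ 0 := by
    have : ((2:ℕ) : ZMod (2*m+1)) ≠ 0 := by
      rw [Ne, ZMod.natCast_eq_zero_iff]
      intro h
      have := Nat.le_of_dvd (by norm_num) h
      omega
    simpa using this
  have e1 : Sd m a b = Md m (a-b) (a+b) := Sd_eq_Md m a b
  have e2 : 2 * Md m (a-b) (a+b) + Sd m (a-b) (a+b) = 2*(m*(m+1)) :=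
    two_Md_add_Sd m _ _ hab' hab
  have e3 : Sd m (a-b) (a+b) = Md m (2*b) (2*a) := by
    rw [Sd_eq_Md]
    have r1 : (a-b) - (a+b) = -(2*b) := by ring
    have r2 : (a-b) + (a+b) = 2*a := by ring
    rw [r1, r2, Md_neg_left]
  have e4 : 2 * Md m (2*b) (2*a) + Sd m (2*b) (2*a) = 2*(m*(m+1)) :=
    two_Md_add_Sd m _ _ (mul_ne_zero h2 hb) (mul_ne_zero h2 ha)
  have e5 : Sd m (2*b) (2*a) = Sd m a b := (Sd_smul m 2 b a h2).trans (Sd_comm m b a)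
  omega

lemma Eglp_eq (m i j : ℕ) :
    Eglp (2*m+1) i j = phi (2*m+1) ((i : ZMod (2*m+1)) * (j : ZMod (2*m+1))) := by
  simp only [Eglp, phi, ← Nat.cast_mul, ZMod.val_natCast]

lemma Sd_double (m : ℕ) (a b : ZMod (2*m+1)) :
    Sd m a b = 2 * ∑ j ∈ Finset.Icc 1 m,
      ((phi (2*m+1) (a*(j : ZMod (2*m+1))) : ℤ)
        - (phi (2*m+1) (b*(j : ZMod (2*m+1))) : ℤ)).natAbs := by
  set G : ℕ → ℕ := fun n => ((phi (2*m+1) (a*(n : ZMod (2*m+1))) : ℤ)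
    - (phi (2*m+1) (b*(n : ZMod (2*m+1))) : ℤ)).natAbs with hG
  have hG0 : G 0 = 0 := by simp [hG, phi_zero]
  have hrange : Finset.range (2*m+1) = insert 0 (Finset.Ioc 0 (2*m)) := by
    ext n; simp only [Finset.mem_range, Finset.mem_insert, Finset.mem_Ioc]; omega
  have hIcc : Finset.Icc 1 m = Finset.Ioc 0 m := by
    ext n; simp only [Finset.mem_Icc, Finset.mem_Ioc]; omega
  have hsymm : ∀ n ∈ Finset.Ioc m (2*m), G n = G (2*m+1-n) := by
    intro n hn
    rw [Finset.mem_Ioc] at hn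
    have hc : ((2*m+1-n : ℕ) : ZMod (2*m+1)) = -(n : ZMod (2*m+1)) := by
      rw [Nat.cast_sub (by omega), ZMod.natCast_self, zero_sub]
    simp only [hG, hc, mul_neg, phi_neg]
  have hhalf : ∑ n ∈ Finset.Ioc m (2*m), G n = ∑ n ∈ Finset.Ioc 0 m, G n := by
    refine Finset.sum_nbij' (fun n => 2*m+1-n) (fun n => 2*m+1-n) ?_ ?_ ?_ ?_ hsymm
    all_goals intro n hn; rw [Finset.mem_Ioc] at hn
    · rw [Finset.mem_Ioc]; omega
    · rw [Finset.mem_Ioc]; omega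
    · omega
    · omega
  calc Sd m a b = ∑ n ∈ Finset.range (2*m+1), G n := sum_zmod _ _
    _ = G 0 + ∑ n ∈ Finset.Ioc 0 (2*m), G n := by
        rw [hrange, Finset.sum_insert (by simp)]
    _ = ∑ n ∈ Finset.Ioc 0 m, G n + ∑ n ∈ Finset.Ioc m (2*m), G n := by
        rw [hG0, zero_add, Finset.sum_Ioc_consecutive G (Nat.zero_le m) (by omega)]
    _ = 2 * ∑ n ∈ Finset.Ioc 0 m, G n := by rw [hhalf]; ring
    _ = _ := by rw [hIcc]

lemma phi_mem (m : ℕ) (x : ZMod (2*m+1)) (hx : x ≠ 0) : phi (2*m+1) x ∈ Finset.Icc 1 m := by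
  have h1 : x.val < 2*m+1 := ZMod.val_lt x
  have h2 : x.val ≠ 0 := fun h => hx ((ZMod.val_eq_zero x).1 h)
  simp only [phi, Finset.mem_Icc]
  omega

lemma phi_inj (m : ℕ) (x x' : ZMod (2*m+1)) (h : phi (2*m+1) x = phi (2*m+1) x') :
    x = x' ∨ x = -x' := by
  have h1 : x.val < 2*m+1 := ZMod.val_lt x
  have h2 : x'.val < 2*m+1 := ZMod.val_lt x'
  simp only [phi] at h
  have hd : x.val = x'.val ∨ x.val + x'.val = 2*m+1 := by omega
  rcases hd with h3 | h3
  · exact Or.inl (ZMod.val_injective _ h3)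
  · right
    have hz : x + x' = 0 := by
      have : (x + x').val = 0 := by
        rw [ZMod.val_add, h3, Nat.mod_self]
      exact (ZMod.val_eq_zero _).1 this
    exact eq_neg_of_add_eq_zero_left hz

lemma cast_ne_zero_of_mem (m i : ℕ) (h1 : 1 ≤ i) (h2 : i ≤ 2*m) :
    (i : ZMod (2*m+1)) ≠ 0 := by
  intro h
  have := ZMod.val_natCast_of_lt (show i < 2*m+1 by omega)
  rw [h, ZMod.val_zero] at this
  omega

lemma col_perm (m : ℕ) [Fact (Nat.Prime (2*m+1))] (j : ℕ) (hj : j ∈ Finset.Icc 1 m) :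
    Finset.image (fun i => Eglp (2*m+1) i j) (Finset.Icc 1 m) = Finset.Icc 1 m := by
  rw [Finset.mem_Icc] at hj
  have hj0 : (j : ZMod (2*m+1)) ≠ 0 := cast_ne_zero_of_mem m j hj.1 (by omega)
  have hsub : Finset.image (fun i => Eglp (2*m+1) i j) (Finset.Icc 1 m)
      ⊆ Finset.Icc 1 m := by
    intro v hv
    rw [Finset.mem_image] at hv
    obtain ⟨i, hi, rfl⟩ := hv
    rw [Finset.mem_Icc] at hi
    rw [Eglp_eq]
    exact phi_mem m _ (mul_ne_zero (cast_ne_zero_of_mem m i hi.1 (by omega)) hj0)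
  have hinj : Set.InjOn (fun i => Eglp (2*m+1) i j) (Finset.Icc 1 m) := by
    intro i hi i' hi' h
    simp only [Finset.coe_Icc, Set.mem_Icc] at hi hi'
    simp only [Eglp_eq] at h
    rcases phi_inj m _ _ h with h2 | h2
    · have h3 := mul_right_cancel₀ hj0 h2
      have e1 := ZMod.val_natCast_of_lt (show i < 2*m+1 by omega)
      have e2 := ZMod.val_natCast_of_lt (show i' < 2*m+1 by omega)
      rw [← e1, ← e2, h3]
    · rw [← neg_mul] at h2
      have h3 := mul_right_cancel₀ hj0 h2
      have h4 : ((i + i' : ℕ) : ZMod (2*m+1)) = 0 := by push_cast; rw [h3]; ring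
      rw [ZMod.natCast_eq_zero_iff] at h4
      have := Nat.le_of_dvd (by omega) h4
      omega
  apply Finset.eq_of_subset_of_card_le hsub
  rw [Finset.card_image_of_injOn hinj]

end Stmt13Aux


open Stmt13Aux in
/-- let `q = 2m+1` be an odd prime with `m ≥ 1` and let
`E(i,j) = min(i·j mod q, q - (i·j mod q))` for `1 ≤ i,j ≤ m`.  Then every column of
`E` is a permutation of `{1,…,m}` (so `E` is an `m × m` Latin hypercube design), and
every pair of distinct rows of `E` has `L1`-distance exactly `m(m+1)/3`. -/
theorem stmt_13 (m : ℕ) (hm : 1 ≤ m) (hq : Nat.Prime (2 * m + 1)) :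
    (∀ j ∈ Finset.Icc 1 m,
        Finset.image (fun i => Eglp (2 * m + 1) i j) (Finset.Icc 1 m) = Finset.Icc 1 m) ∧
    (∀ i ∈ Finset.Icc 1 m, ∀ i' ∈ Finset.Icc 1 m, i ≠ i' →
        ∑ j ∈ Finset.Icc 1 m,
          ((Eglp (2 * m + 1) i j : ℤ) - (Eglp (2 * m + 1) i' j : ℤ)).natAbs
          = m * (m + 1) / 3) := by
  haveI := Fact.mk hq
  constructor
  · exact fun j hj => col_perm m j hj
  · intro i hi i' hi' hne
    rw [Finset.mem_Icc] at hi hi'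
    have ha : (i : ZMod (2*m+1)) ≠ 0 := cast_ne_zero_of_mem m i hi.1 (by omega)
    have hb : (i' : ZMod (2*m+1)) ≠ 0 := cast_ne_zero_of_mem m i' hi'.1 (by omega)
    have hab : (i : ZMod (2*m+1)) + (i' : ZMod (2*m+1)) ≠ 0 := by
      intro h
      have h4 : ((i + i' : ℕ) : ZMod (2*m+1)) = 0 := by push_cast; exact h
      rw [ZMod.natCast_eq_zero_iff] at h4
      have := Nat.le_of_dvd (by omega) h4
      omega
    have hab' : (i : ZMod (2*m+1)) - (i' : ZMod (2*m+1)) ≠ 0 := by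
      intro h
      have h3 : (i : ZMod (2*m+1)) = (i' : ZMod (2*m+1)) := by rwa [sub_eq_zero] at h
      have e1 := ZMod.val_natCast_of_lt (show i < 2*m+1 by omega)
      have e2 := ZMod.val_natCast_of_lt (show i' < 2*m+1 by omega)
      exact hne (by rw [← e1, ← e2, h3])
    have hc := Sd_const m hm _ _ ha hb hab hab'
    have hd := Sd_double m (i : ZMod (2*m+1)) (i' : ZMod (2*m+1))
    have he : ∑ j ∈ Finset.Icc 1 m,
          ((Eglp (2 * m + 1) i j : ℤ) - (Eglp (2 * m + 1) i' j : ℤ)).natAbs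
        = ∑ j ∈ Finset.Icc 1 m,
          ((phi (2*m+1) ((i : ZMod (2*m+1))*(j : ZMod (2*m+1))) : ℤ)
            - (phi (2*m+1) ((i' : ZMod (2*m+1))*(j : ZMod (2*m+1))) : ℤ)).natAbs :=
      Finset.sum_congr rfl fun j _ => by rw [Eglp_eq, Eglp_eq]
    rw [he]
    rw [hd] at hc
    obtain ⟨K, hK⟩ : ∃ K, m*(m+1) = K := ⟨_, rfl⟩
    rw [hK] at hc ⊢
    omega
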